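/- Let A₁ and A₂ be n×n complex Hermitian matrices such that A₁ + I is positive semidefinite and A₂ is positive semidefinite, and set ρ₂ = ρ(A₂). If z ∈ ℂ satisfies Im(z) > 0 or Im(z) < -ρ₂, then the matrix A₁ - i·A₂ - zI is invertible. -/

import Mathlib

open Matrix
open scoped ComplexOrder

lemma quad_bound {n : ℕ} (A : Matrix (Fin n) (Fin n) ℂ) (hA : A.IsHermitian) (hpsd : A.PosSemidef)
    (v : Fin n → ℂ) :
    (star v ⬝ᵥ (A *ᵥ v)).re ≤ (sSup ((fun μ => ‖μ‖) '' spectrum ℂ A)) * (star v ⬝ᵥ v).re := by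
  classical
  set ρ : ℝ := sSup ((fun μ => ‖μ‖) '' spectrum ℂ A) with hρ
  set U : Matrix (Fin n) (Fin n) ℂ := (hA.eigenvectorUnitary : Matrix (Fin n) (Fin n) ℂ) with hU
  set w : Fin n → ℂ := star U *ᵥ v with hw
  have hswap : star w = (star v) ᵥ* U := by
    rw [hw, star_mulVec]; simp [Matrix.star_eq_conjTranspose]
  have hb : star v ⬝ᵥ (A *ᵥ v)
      = star w ⬝ᵥ ((diagonal (RCLike.ofReal ∘ hA.eigenvalues) : Matrix (Fin n) (Fin n) ℂ) *ᵥ w) := by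
    conv_lhs => rw [hA.spectral_theorem, Unitary.conjStarAlgAut_apply]
    rw [hswap, hw, ← mulVec_mulVec, ← mulVec_mulVec, dotProduct_mulVec]
  have hc : star v ⬝ᵥ v = star w ⬝ᵥ w := by
    rw [hswap, hw, dotProduct_mulVec, vecMul_vecMul,
      (Matrix.mem_unitaryGroup_iff).mp (hA.eigenvectorUnitary).2, vecMul_one]
  have hbsum : star w ⬝ᵥ ((diagonal (RCLike.ofReal ∘ hA.eigenvalues) : Matrix (Fin n) (Fin n) ℂ) *ᵥ w)
      = ∑ i, ((hA.eigenvalues i : ℂ) * Complex.normSq (w i)) := by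
    simp only [dotProduct, mulVec_diagonal, Function.comp_apply]
    refine Finset.sum_congr rfl fun i _ => ?_
    rw [Complex.normSq_eq_conj_mul_self]
    simp only [Pi.star_apply, RCLike.star_def]
    rw [mul_left_comm]; rfl
  have hcsum : star w ⬝ᵥ w = ∑ i, ((Complex.normSq (w i) : ℂ)) := by
    simp only [dotProduct, Pi.star_apply]
    refine Finset.sum_congr rfl fun i _ => ?_
    rw [Complex.normSq_eq_conj_mul_self]; rfl
  have heig : ∀ i, hA.eigenvalues i ≤ ρ := by
    intro i
    have hmem : ((hA.eigenvalues i : ℝ) : ℂ) ∈ spectrum ℂ A :=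
      spectrum.algebraMap_mem ℂ (hA.eigenvalues_mem_spectrum_real i)
    have hbdd : BddAbove ((fun μ => ‖μ‖) '' spectrum ℂ A) :=
      ((A.finite_spectrum).image _).bddAbove
    calc hA.eigenvalues i ≤ ‖((hA.eigenvalues i : ℝ) : ℂ)‖ := by
          rw [Complex.norm_real]; exact le_abs_self _
      _ ≤ ρ := le_csSup hbdd ⟨_, hmem, rfl⟩
  rw [hb, hc, hbsum, hcsum]
  rw [Complex.re_sum, Complex.re_sum]
  simp only [Complex.ofReal_re]
  rw [Finset.mul_sum]
  have : ∀ i ∈ Finset.univ, ((hA.eigenvalues i : ℂ) * (Complex.normSq (w i) : ℂ)).re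
      ≤ ρ * Complex.normSq (w i) := by
    intro i _
    have : ((hA.eigenvalues i : ℂ) * (Complex.normSq (w i) : ℂ)).re
        = hA.eigenvalues i * Complex.normSq (w i) := by
      push_cast; simp [Complex.ofReal_mul]
    rw [this]
    exact mul_le_mul_of_nonneg_right (heig i) (Complex.normSq_nonneg _)
  exact Finset.sum_le_sum this

/-- The spectral radius of a square complex matrix: the supremum of the moduli
of its eigenvalues. -/
noncomputable def specRad {n : ℕ} (M : Matrix (Fin n) (Fin n) ℂ) : ℝ :=
  sSup ((fun μ => ‖μ‖) '' spectrum ℂ M)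

theorem shifted_matrix_invertible {n : ℕ} (A₁ A₂ : Matrix (Fin n) (Fin n) ℂ)
    (hH₁ : A₁.IsHermitian) (hH₂ : A₂.IsHermitian)
    (hpsd₁ : (A₁ + 1).PosSemidef) (hpsd₂ : A₂.PosSemidef)
    (ρ₂ : ℝ) (hρ₂ : ρ₂ = specRad A₂)
    (z : ℂ) (hz : 0 < z.im ∨ z.im < -ρ₂) :
    IsUnit (A₁ - Complex.I • A₂ - z • (1 : Matrix (Fin n) (Fin n) ℂ)) := by
  classical
  set M : Matrix (Fin n) (Fin n) ℂ := A₁ - Complex.I • A₂ - z • 1 with hM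
  rw [Matrix.isUnit_iff_isUnit_det, isUnit_iff_ne_zero]
  intro hdet
  obtain ⟨v, hvne, hMv⟩ := (Matrix.exists_mulVec_eq_zero_iff).mpr hdet
  set a : ℂ := star v ⬝ᵥ (A₁ *ᵥ v) with ha
  set b : ℂ := star v ⬝ᵥ (A₂ *ᵥ v) with hb
  set c : ℂ := star v ⬝ᵥ v with hc
  have hq : (0 : ℂ) = a - Complex.I * b - z * c := by
    have : star v ⬝ᵥ (M *ᵥ v) = 0 := by rw [hMv, dotProduct_zero]
    rw [← this, hM]
    simp [sub_mulVec, smul_mulVec, one_mulVec, dotProduct_sub, dotProduct_smul,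
      smul_eq_mul, ha, hb, hc]
  -- b is nonneg real
  have hbnn : 0 ≤ b.re ∧ 0 = b.im := Complex.nonneg_iff.mp (hpsd₂.dotProduct_mulVec_nonneg v)
  -- c is real with positive real part
  have hcsum : c = ∑ i, ((Complex.normSq (v i) : ℂ)) := by
    rw [hc]
    simp only [dotProduct, Pi.star_apply]
    refine Finset.sum_congr rfl fun i _ => ?_
    rw [Complex.normSq_eq_conj_mul_self]; rfl
  have hcim : c.im = 0 := by rw [hcsum, Complex.im_sum]; simp
  have hcre : 0 < c.re := by
    rw [hcsum, Complex.re_sum]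
    simp only [Complex.ofReal_re]
    obtain ⟨i, hi⟩ := Function.ne_iff.mp hvne
    exact Finset.sum_pos' (fun j _ => Complex.normSq_nonneg _)
      ⟨i, Finset.mem_univ i, Complex.normSq_pos.mpr hi⟩
  -- a is real
  have haim : a.im = 0 := by
    have h1 : 0 ≤ star v ⬝ᵥ ((A₁ + 1) *ᵥ v) := hpsd₁.dotProduct_mulVec_nonneg v
    have h2 : star v ⬝ᵥ ((A₁ + 1) *ᵥ v) = a + c := by
      simp [add_mulVec, one_mulVec, dotProduct_add, ha, hc]
    have := (Complex.nonneg_iff.mp h1).2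
    rw [h2] at this
    simp only [Complex.add_im, hcim] at this
    linarith
  -- take imaginary parts
  have him : b.re = -z.im * c.re := by
    have := congrArg Complex.im hq
    simp only [Complex.zero_im, Complex.sub_im, Complex.mul_im, Complex.I_re, Complex.I_im,
      haim, hcim] at this
    ring_nf at this ⊢
    linarith
  rcases hz with hpos | hneg
  · nlinarith [hbnn.1]
  · have hbound : b.re ≤ ρ₂ * c.re := by
      rw [hρ₂, specRad]
      exact quad_bound A₂ hH₂ hpsd₂ v
    nlinarith
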